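/- Let (α₁,α₂) be consistent Whitney parameters, and define α₁* = α₁(1+√α₂)⁻¹, α₂* = √α₂, with W* the Whitney box with parameters (α₁*, α₂*). Then for every (y,t) ∈ ℝ^{n+1}_+, ⋃_{(z,s)∈W*(y,t)} W*(z,s) ⊆ W(y,t), where W is the Whitney box with parameters (α₁,α₂). -/

import Mathlib

open Metric Set

/-- The Whitney box with parameters (β₁, β₂) at the point q = (y,t). -/
def whitneyBox (n : ℕ) (β₁ β₂ : ℝ) (q : EuclideanSpace ℝ (Fin n) × ℝ) :
    Set (EuclideanSpace ℝ (Fin n) × ℝ) :=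
  {p | dist p.1 q.1 < β₁ * q.2 ∧ β₂⁻¹ * q.2 < p.2 ∧ p.2 < β₂ * q.2}

/-- with α₁* = α₁(1+√α₂)⁻¹ and α₂* = √α₂,
⋃_{(z,s)∈W*(y,t)} W*(z,s) ⊆ W(y,t). -/
theorem whitney_star_union (n : ℕ) (α₁ α₂ : ℝ)
    (h1 : 0 < α₁) (h2 : α₁ < α₂⁻¹) (h3 : α₂⁻¹ < 1)
    (y : EuclideanSpace ℝ (Fin n)) (t : ℝ) (ht : 0 < t) :
    (⋃ p ∈ whitneyBox n (α₁ * (1 + Real.sqrt α₂)⁻¹) (Real.sqrt α₂) (y, t),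
        whitneyBox n (α₁ * (1 + Real.sqrt α₂)⁻¹) (Real.sqrt α₂) p) ⊆
      whitneyBox n α₁ α₂ (y, t) := by
  have hα₂1 : 1 < α₂ := by
    have h0 : 0 < α₂⁻¹ := lt_trans h1 h2
    have : 0 < α₂ := inv_pos.mp h0
    nlinarith [inv_mul_cancel₀ (ne_of_gt this)]
  have hα₂0 : 0 < α₂ := lt_trans one_pos hα₂1
  set σ := Real.sqrt α₂ with hσdef
  have hσ1 : 1 < σ := by
    rw [hσdef, show (1:ℝ) = Real.sqrt 1 by simp]
    exact Real.sqrt_lt_sqrt zero_le_one hα₂1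
  have hσ0 : 0 < σ := lt_trans one_pos hσ1
  have hσsq : σ * σ = α₂ := Real.mul_self_sqrt hα₂0.le
  set β := α₁ * (1 + σ)⁻¹ with hβdef
  have hβ0 : 0 < β := mul_pos h1 (inv_pos.mpr (by linarith))
  rintro p hp
  simp only [mem_iUnion] at hp
  obtain ⟨q, hq, hpq⟩ := hp
  obtain ⟨hq1, hq2, hq3⟩ := hq
  obtain ⟨hp1, hp2, hp3⟩ := hpq
  have hs0 : 0 < q.2 := lt_trans (mul_pos (inv_pos.mpr hσ0) ht) hq2
  constructor
  · have : dist p.1 y ≤ dist p.1 q.1 + dist q.1 y := dist_triangle _ _ _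
    have hβσ : β * (1 + σ) = α₁ := by
      rw [hβdef]; field_simp
    calc dist p.1 y ≤ dist p.1 q.1 + dist q.1 y := dist_triangle _ _ _
      _ < β * q.2 + β * t := by exact add_lt_add hp1 hq1
      _ < β * (σ * t) + β * t := by
          exact add_lt_add_left (by exact (mul_lt_mul_iff_right₀ hβ0).mpr hq3) _
      _ = β * (1 + σ) * t := by ring
      _ = α₁ * t := by rw [hβσ]
  constructor
  · have h1' : σ⁻¹ * (σ⁻¹ * t) < σ⁻¹ * q.2 :=
      (mul_lt_mul_iff_right₀ (inv_pos.mpr hσ0)).mpr hq2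
    have h2' : σ⁻¹ * q.2 < p.2 := hp2
    have heq : σ⁻¹ * (σ⁻¹ * t) = α₂⁻¹ * t := by
      rw [← hσsq, mul_inv]; ring
    linarith [heq ▸ h1']
  · have h1' : σ * q.2 < σ * (σ * t) := (mul_lt_mul_iff_right₀ hσ0).mpr hq3
    have heq : σ * (σ * t) = α₂ * t := by rw [← hσsq]; ring
    linarith [heq ▸ h1']
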